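/- Every hermitian diagonally dominant matrix B ∈ M_d(ℂ) (i.e., B = B* and B_{ii} ≥ Σ_{j≠i} |B_{ij}| for all i) can be written as a sum of positive semidefinite matrices each supported on at most a 2×2 principal submatrix; in particular, B is positive semidefinite with factor width at most 2. -/

import Mathlib

open Matrix Finset
open scoped ComplexOrder

namespace FWAux

open Complex

lemma psd_outer {d : ℕ} (v : Fin d → ℂ) : (vecMulVec v (star v)).PosSemidef := by
  rw [vecMulVec_eq (Fin 1), ← conjTranspose_replicateCol]
  exact posSemidef_self_mul_conjTranspose _


lemma psd_sum {d : ℕ} {ι : Type*} [Fintype ι] (P : ι → Matrix (Fin d) (Fin d) ℂ)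
    (h : ∀ n, (P n).PosSemidef) : (∑ n, P n).PosSemidef := by
  refine ⟨?_, fun x => ?_⟩
  · show (∑ n, P n)ᴴ = _
    rw [conjTranspose_sum]
    exact Finset.sum_congr rfl fun n _ => (h n).1
  · exact (posSemidef_sum univ fun n _ => h n).2 x

/-- the rank-one vector for the pair `(i,j)`. -/
noncomputable def pairVec {d : ℕ} (B : Matrix (Fin d) (Fin d) ℂ) (i j : Fin d) :
    Fin d → ℂ := fun k =>
  if k = i then B i j / (Real.sqrt (‖B i j‖) : ℂ)
  else if k = j then (Real.sqrt (‖B i j‖) : ℂ) else 0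

/-- the full family of vectors. -/
noncomputable def wvec {d : ℕ} (B : Matrix (Fin d) (Fin d) ℂ) :
    (Fin d ⊕ Fin d × Fin d) → Fin d → ℂ
  | Sum.inl i => fun k =>
      if k = i then
        (Real.sqrt ((B i i).re - ∑ j ∈ univ.filter (· ≠ i), ‖B i j‖) : ℂ)
      else 0
  | Sum.inr p => fun k => if p.1 < p.2 then pairVec B p.1 p.2 k else 0

lemma sqrt_ne_zero_of_ne {z : ℂ} (hz : z ≠ 0) :
    ((Real.sqrt (‖z‖) : ℂ)) ≠ 0 := by
  rw [ne_eq, Complex.ofReal_eq_zero, Real.sqrt_eq_zero (norm_nonneg z)]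
  simpa using hz

lemma sqrt_conj_mul_self (x : ℝ) (hx : 0 ≤ x) :
    ((Real.sqrt x : ℝ) : ℂ) * (starRingEnd ℂ) ((Real.sqrt x : ℝ) : ℂ) = (x : ℂ) := by
  rw [Complex.conj_ofReal, ← Complex.ofReal_mul, Real.mul_self_sqrt hx]

lemma pair_mul_conj_self (z : ℂ) :
    (z / (Real.sqrt (‖z‖) : ℂ)) *
      (starRingEnd ℂ) (z / (Real.sqrt (‖z‖) : ℂ)) = (‖z‖ : ℂ) := by
  by_cases hz : z = 0
  · simp [hz]
  · have hs := sqrt_ne_zero_of_ne hz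
    have habs : ((‖z‖ : ℝ) : ℂ) ≠ 0 :=
      Complex.ofReal_ne_zero.mpr (norm_ne_zero_iff.mpr hz)
    rw [map_div₀, Complex.conj_ofReal, div_mul_div_comm, Complex.mul_conj,
      ← Complex.ofReal_mul, Real.mul_self_sqrt (norm_nonneg z),
      Complex.normSq_eq_norm_sq, pow_two, Complex.ofReal_mul, mul_div_assoc,
      div_self habs, mul_one]

lemma pair_cross (z : ℂ) :
    (z / (Real.sqrt (‖z‖) : ℂ)) *
      (starRingEnd ℂ) ((Real.sqrt (‖z‖) : ℂ) : ℂ) = z := by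
  by_cases hz : z = 0
  · simp [hz]
  · rw [Complex.conj_ofReal, div_mul_cancel₀ _ (sqrt_ne_zero_of_ne hz)]

lemma pair_cross' (z : ℂ) :
    ((Real.sqrt (‖z‖) : ℂ) : ℂ) *
      (starRingEnd ℂ) (z / (Real.sqrt (‖z‖) : ℂ)) = (starRingEnd ℂ) z := by
  by_cases hz : z = 0
  · simp [hz]
  · rw [map_div₀, Complex.conj_ofReal, ← mul_div_assoc,
      mul_div_cancel_left₀ _ (sqrt_ne_zero_of_ne hz)]

lemma sum_if_const {α : Type*} [Fintype α] (p : Prop) [Decidable p] (f : α → ℂ) :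
    ∑ x : α, (if p then f x else 0) = if p then ∑ x : α, f x else 0 := by
  split <;> simp

theorem wvec_support {d : ℕ} (B : Matrix (Fin d) (Fin d) ℂ) (n : Fin d ⊕ Fin d × Fin d) :
    (univ.filter (fun k => wvec B n k ≠ 0)).card ≤ 2 := by
  rcases n with i | ⟨i, j⟩
  · calc (univ.filter (fun k => wvec B (Sum.inl i) k ≠ 0)).card
        ≤ ({i} : Finset (Fin d)).card := by
          apply card_le_card
          intro k hk
          simp only [mem_filter, mem_univ, true_and, wvec] at hk
          by_contra h
          simp only [mem_singleton] at h
          simp [h] at hk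
      _ ≤ 2 := by simp
  · calc (univ.filter (fun k => wvec B (Sum.inr (i, j)) k ≠ 0)).card
        ≤ ({i, j} : Finset (Fin d)).card := by
          apply card_le_card
          intro k hk
          simp only [mem_filter, mem_univ, true_and, wvec, pairVec] at hk
          by_contra h
          simp only [mem_insert, mem_singleton, not_or] at h
          exact hk (by simp [h.1, h.2])
      _ ≤ 2 := card_insert_le _ _ |>.trans (by simp)

theorem key {d : ℕ} (B : Matrix (Fin d) (Fin d) ℂ) (hherm : B.IsHermitian)
    (hdd : ∀ i, ∑ j ∈ univ.filter (· ≠ i), ‖B i j‖ ≤ (B i i).re) :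
    B = ∑ n : Fin d ⊕ Fin d × Fin d, vecMulVec (wvec B n) (star (wvec B n)) := by
  have hBsymm : ∀ i j : Fin d, B j i = (starRingEnd ℂ) (B i j) := by
    intro i j
    have h := hherm.apply i j
    calc B j i = (starRingEnd ℂ) ((starRingEnd ℂ) (B j i)) := (Complex.conj_conj _).symm
      _ = (starRingEnd ℂ) (B i j) := by
          rw [show (starRingEnd ℂ) (B j i) = B i j from h]
  have habs_symm : ∀ i j : Fin d, ‖B j i‖ = ‖B i j‖ := by
    intro i j; rw [hBsymm i j, Complex.norm_conj]
  ext a b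
  rw [Matrix.sum_apply, Fintype.sum_sum_type]
  simp only [vecMulVec_apply, Pi.star_apply, RCLike.star_def]
  have hdiag : ∀ i : Fin d,
      wvec B (Sum.inl i) a * (starRingEnd ℂ) (wvec B (Sum.inl i) b)
        = if i = a then (if b = a then
            (((B a a).re - ∑ j ∈ univ.filter (· ≠ a), ‖B a j‖ : ℝ) : ℂ)
          else 0) else 0 := by
    intro i
    simp only [wvec]
    by_cases hia : a = i
    · subst hia
      by_cases hib : b = a
      · subst hib
        simp only [if_pos rfl]
        exact sqrt_conj_mul_self _ (sub_nonneg.mpr (hdd _))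
      · simp only [if_pos rfl, if_neg hib, map_zero, mul_zero, if_true]
    · rw [if_neg hia, zero_mul, if_neg (fun h => hia h.symm)]
  rw [Finset.sum_congr rfl (fun i _ => hdiag i), Finset.sum_ite_eq' univ a]
  simp only [mem_univ, if_true]
  by_cases hab : a = b
  · -- diagonal entry
    subst hab
    rw [if_pos rfl]
    have hpair : ∀ p : Fin d × Fin d,
        wvec B (Sum.inr p) a * (starRingEnd ℂ) (wvec B (Sum.inr p) a)
          = (if p.2 = a then (if p.1 < a then ((‖B p.1 a‖ : ℝ) : ℂ) else 0) else 0)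
            + (if p.1 = a then (if a < p.2 then ((‖B a p.2‖ : ℝ) : ℂ) else 0) else 0) := by
      rintro ⟨i, j⟩
      simp only [wvec]
      by_cases hij : i < j
      · rw [if_pos hij]
        by_cases hai : i = a
        · subst hai
          have hja : ¬ (j = i) := by omega
          rw [if_neg hja, if_pos rfl, if_pos hij, zero_add]
          unfold pairVec
          rw [if_pos rfl]
          exact pair_mul_conj_self _
        · by_cases haj : j = a
          · subst haj
            rw [if_pos rfl, if_pos hij, if_neg hai, add_zero]
            unfold pairVec
            rw [if_neg (fun h : j = i => hai h.symm), if_pos rfl,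
              sqrt_conj_mul_self _ (norm_nonneg _), habs_symm]
          · rw [if_neg haj, if_neg hai, add_zero]
            unfold pairVec
            rw [if_neg (fun h : a = i => hai h.symm),
              if_neg (fun h : a = j => haj h.symm), zero_mul]
      · rw [if_neg hij, zero_mul]
        have e1 : (if j = a then (if i < a then ((‖B i a‖ : ℝ) : ℂ) else 0) else 0)
            = 0 := by
          by_cases hja : j = a
          · subst hja; rw [if_pos rfl, if_neg (by omega)]
          · rw [if_neg hja]
        have e2 : (if i = a then (if a < j then ((‖B a j‖ : ℝ) : ℂ) else 0) else 0)
            = 0 := by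
          by_cases hia : i = a
          · subst hia; rw [if_pos rfl, if_neg (by omega)]
          · rw [if_neg hia]
        rw [e1, e2, add_zero]
    rw [Finset.sum_congr rfl (fun p _ => hpair p), Finset.sum_add_distrib,
      Fintype.sum_prod_type, Fintype.sum_prod_type]
    have hs1 : (∑ i : Fin d, ∑ j : Fin d,
        (if j = a then (if i < a then ((‖B i a‖ : ℝ) : ℂ) else 0) else 0))
        = ((∑ i ∈ univ.filter (· < a), ‖B i a‖ : ℝ) : ℂ) := by
      simp only [Finset.sum_ite_eq' univ a, mem_univ, if_true]
      rw [Complex.ofReal_sum, Finset.sum_filter]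
    have hs2 : (∑ i : Fin d, ∑ j : Fin d,
        (if i = a then (if a < j then ((‖B a j‖ : ℝ) : ℂ) else 0) else 0))
        = ((∑ j ∈ univ.filter (a < ·), ‖B a j‖ : ℝ) : ℂ) := by
      simp only [sum_if_const]
      rw [Finset.sum_ite_eq' univ a, if_pos (mem_univ a), Complex.ofReal_sum,
        Finset.sum_filter]
    rw [hs1, hs2]
    have hsplit : ∑ j ∈ univ.filter (· ≠ a), ‖B a j‖
        = ∑ i ∈ univ.filter (· < a), ‖B i a‖
          + ∑ j ∈ univ.filter (a < ·), ‖B a j‖ := by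
      rw [← Finset.sum_filter_add_sum_filter_not (univ.filter (· ≠ a)) (· < a)]
      congr 1
      · rw [Finset.filter_filter]
        refine Finset.sum_congr ?_ (fun j _ => habs_symm j a)
        ext j; simp only [mem_filter, mem_univ, true_and]; omega
      · rw [Finset.filter_filter]
        refine Finset.sum_congr ?_ (fun j _ => rfl)
        ext j; simp only [mem_filter, mem_univ, true_and]; omega
    have hre : B a a = ((B a a).re : ℂ) := (hherm.coe_re_apply_self a).symm
    rw [hre, ← Complex.ofReal_add, ← Complex.ofReal_add]
    norm_cast
    rw [hsplit]
    ring
  · -- off-diagonal entry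
    rw [if_neg (fun h => hab h.symm), zero_add]
    have hpair : ∀ p : Fin d × Fin d,
        wvec B (Sum.inr p) a * (starRingEnd ℂ) (wvec B (Sum.inr p) b)
          = (if p.2 = b then (if p.1 = a then (if a < b then B a b else 0) else 0) else 0)
            + (if p.2 = a then (if p.1 = b then (if b < a then B a b else 0) else 0) else 0) := by
      rintro ⟨i, j⟩
      simp only [wvec]
      by_cases hij : i < j
      · simp only [if_pos hij]
        by_cases hai : i = a
        · subst hai
          by_cases hjb : j = b
          · subst hjb
            rw [if_pos rfl, if_pos rfl, if_pos hij, if_neg (show ¬ (j = i) by omega),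
              add_zero]
            unfold pairVec
            rw [if_pos rfl, if_neg (show ¬ (j = i) by omega), if_pos rfl]
            exact pair_cross _
          · have hb : pairVec B i j b = 0 := by
              unfold pairVec
              rw [if_neg (fun h : b = i => hab h.symm), if_neg (fun h : b = j => hjb h.symm)]
            rw [hb, map_zero, mul_zero, if_neg hjb, if_neg (show ¬ (j = i) by omega),
              add_zero]
        · by_cases hbi : i = b
          · subst hbi
            by_cases hja : j = a
            · subst hja
              rw [if_neg (show ¬ (j = i) by omega), if_pos rfl, if_pos rfl, if_pos hij,
                zero_add]
              unfold pairVec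
              rw [if_pos rfl, if_neg (show ¬ (j = i) by omega), if_pos rfl, pair_cross']
              exact (hBsymm i j).symm
            · have ha : pairVec B i j a = 0 := by
                unfold pairVec
                rw [if_neg (fun h : a = i => hai h.symm), if_neg (fun h : a = j => hja h.symm)]
              rw [ha, zero_mul, if_neg hja, add_zero, if_neg (show ¬ (j = i) by omega)]
          · have h1 : (if j = b then (if i = a then (if a < b then B a b else 0) else 0)
                else 0) = 0 := by
              by_cases hjb : j = b
              · subst hjb; rw [if_pos rfl, if_neg hai]
              · rw [if_neg hjb]
            have h2 : (if j = a then (if i = b then (if b < a then B a b else 0) else 0)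
                else 0) = 0 := by
              by_cases hja : j = a
              · subst hja; rw [if_pos rfl, if_neg hbi]
              · rw [if_neg hja]
            rw [h1, h2, add_zero]
            by_cases hja : j = a
            · subst hja
              have hb : pairVec B i j b = 0 := by
                unfold pairVec
                rw [if_neg (fun h : b = i => hbi h.symm), if_neg (fun h : b = j => hab h.symm)]
              rw [hb, map_zero, mul_zero]
            · have ha : pairVec B i j a = 0 := by
                unfold pairVec
                rw [if_neg (fun h : a = i => hai h.symm), if_neg (fun h : a = j => hja h.symm)]
              rw [ha, zero_mul]
      · rw [if_neg hij, zero_mul]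
        have e1 : (if j = b then (if i = a then (if a < b then B a b else 0) else 0)
            else 0) = 0 := by
          by_cases hjb : j = b
          · subst hjb
            by_cases hia : i = a
            · subst hia; rw [if_pos rfl, if_pos rfl, if_neg hij]
            · rw [if_pos rfl, if_neg hia]
          · rw [if_neg hjb]
        have e2 : (if j = a then (if i = b then (if b < a then B a b else 0) else 0)
            else 0) = 0 := by
          by_cases hja : j = a
          · subst hja
            by_cases hib : i = b
            · subst hib; rw [if_pos rfl, if_pos rfl, if_neg hij]
            · rw [if_pos rfl, if_neg hib]
          · rw [if_neg hja]
        rw [e1, e2, add_zero]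
    rw [Finset.sum_congr rfl (fun p _ => hpair p), Finset.sum_add_distrib,
      Fintype.sum_prod_type, Fintype.sum_prod_type]
    simp only [Finset.sum_ite_eq' univ, mem_univ, if_true]
    rcases lt_or_gt_of_ne (show a ≠ b from hab) with h | h
    · rw [if_pos h, if_neg (show ¬ b < a by omega), add_zero]
    · rw [if_neg (show ¬ a < b by omega), if_pos h, zero_add]

end FWAux

/-- Every hermitian diagonally dominant matrix `B ∈ M_d(ℂ)` can be written as a
sum of positive semidefinite matrices each supported on at most a 2×2 principal submatrix;
in particular `B` is positive semidefinite with factor width at most 2. -/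
theorem hermitian_diagonally_dominant_factor_width_two {d : ℕ}
    (B : Matrix (Fin d) (Fin d) ℂ) (hherm : B.IsHermitian)
    (hdd : ∀ i, ∑ j ∈ univ.filter (· ≠ i), ‖B i j‖ ≤ (B i i).re) :
    (∃ (N : ℕ) (P : Fin N → Matrix (Fin d) (Fin d) ℂ),
      (∀ n, (P n).PosSemidef) ∧
      (∀ n, ∃ s : Finset (Fin d), s.card ≤ 2 ∧
        ∀ i j, (i ∉ s ∨ j ∉ s) → P n i j = 0) ∧
      B = ∑ n, P n) ∧
    B.PosSemidef ∧
    (∃ (N : ℕ) (v : Fin N → Fin d → ℂ),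
      (∀ n, (univ.filter (fun i => v n i ≠ 0)).card ≤ 2) ∧
      B = ∑ n, vecMulVec (v n) (star (v n))) := by
  classical
  set ι := (Fin d ⊕ Fin d × Fin d)
  let e : ι ≃ Fin (Fintype.card ι) := Fintype.equivFin ι
  set N := Fintype.card ι
  let v : Fin N → Fin d → ℂ := fun n => FWAux.wvec B (e.symm n)
  have hsum : B = ∑ n : Fin N, vecMulVec (v n) (star (v n)) := by
    rw [FWAux.key B hherm hdd]
    exact (Equiv.sum_comp e.symm fun m => vecMulVec (FWAux.wvec B m) (star (FWAux.wvec B m))).symm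
  have hsupp : ∀ n, (univ.filter (fun i => v n i ≠ 0)).card ≤ 2 :=
    fun n => FWAux.wvec_support B (e.symm n)
  refine ⟨⟨N, fun n => vecMulVec (v n) (star (v n)), fun n => FWAux.psd_outer _,
    fun n => ⟨univ.filter (fun i => v n i ≠ 0), hsupp n, ?_⟩, hsum⟩, ?_, N, v, hsupp, hsum⟩
  · intro i j hij
    rcases hij with hi | hj
    · have : v n i = 0 := by
        by_contra h; exact hi (mem_filter.mpr ⟨mem_univ _, h⟩)
      simp [vecMulVec_apply, this]
    · have : v n j = 0 := by
        by_contra h; exact hj (mem_filter.mpr ⟨mem_univ _, h⟩)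
      simp [vecMulVec_apply, this]
  · rw [hsum]
    exact FWAux.psd_sum _ fun n => FWAux.psd_outer _
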